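/- Let n ≥ 1 and δ ∈ (0, n]. If f ∈ nL¹(ℝⁿ, H̃^δ_∞) is an nL¹-limit of continuous functions, then f is Lebesgue measurable. -/

import Mathlib

open MeasureTheory Set Metric Filter Topology
open scoped ENNReal

noncomputable section

/-- Euclidean space `ℝⁿ`. -/
abbrev En (n : ℕ) : Type := EuclideanSpace ℝ (Fin n)

/-- The half-open dyadic cube `2^k (m + [0,1)ⁿ)`, `k : ℤ`, `m : ℤⁿ`. -/
def dyadicCube (n : ℕ) (k : ℤ) (m : Fin n → ℤ) : Set (En n) :=
  {x | ∀ i, (m i : ℝ) * 2 ^ k ≤ x i ∧ x i < ((m i : ℝ) + 1) * 2 ^ k}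

/-- The `δ`-dimensional dyadic Hausdorff content `H̃^δ_∞`: the infimum of `Σ ℓ(Q_i)^δ`
over all countable collections of dyadic cubes whose union's interior covers `E`. -/
def dyadicContent (n : ℕ) (δ : ℝ) (E : Set (En n)) : ℝ≥0∞ :=
  ⨅ (c : ℕ → ℤ × (Fin n → ℤ))
    (_ : E ⊆ interior (⋃ i, dyadicCube n (c i).1 (c i).2)),
    ∑' i, ENNReal.ofReal (((2 : ℝ) ^ (c i).1) ^ δ)

/-- The Choquet integral `∫_Ω f dH̃^δ_∞ := ∫_0^∞ H̃^δ_∞({x ∈ Ω : f x > t}) dt`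
of a `[0,∞]`-valued function over `Ω ⊆ ℝⁿ`. -/
def choquetIntegral (n : ℕ) (δ : ℝ) (Ω : Set (En n)) (f : En n → ℝ≥0∞) : ℝ≥0∞ :=
  ∫⁻ t in Ioi (0 : ℝ), dyadicContent n δ {x | x ∈ Ω ∧ ENNReal.ofReal t < f x}

/-- The Choquet integral `∫_Ω |f| dH̃^δ_∞` of a real-valued function. -/
def choquetIntegralAbs (n : ℕ) (δ : ℝ) (Ω : Set (En n)) (f : En n → ℝ) : ℝ≥0∞ :=
  choquetIntegral n δ Ω (fun x => ENNReal.ofReal |f x|)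

/-- The Choquet integral `∫_Ω |f| dH̃^δ_∞` of an extended-real-valued function. -/
def choquetIntegralEAbs (n : ℕ) (δ : ℝ) (Ω : Set (En n)) (f : En n → EReal) : ℝ≥0∞ :=
  choquetIntegral n δ Ω (fun x => (f x).abs)

/-- The ball average `f^δ_{B(x,r)} := (1/H̃^δ_∞(B(x,r))) ∫_{B(x,r)} f dH̃^δ_∞`. -/
def ballAvg (n : ℕ) (δ : ℝ) (f : En n → ℝ≥0∞) (x : En n) (r : ℝ) : ℝ≥0∞ :=
  choquetIntegral n δ (ball x r) f / dyadicContent n δ (ball x r)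

/-- The Hausdorff-content centred maximal function `M^δ f(x)`. -/
def maximal (n : ℕ) (δ : ℝ) (f : En n → ℝ≥0∞) (x : En n) : ℝ≥0∞ :=
  ⨆ (r : ℝ) (_ : 0 < r), ballAvg n δ f x r

/-- `f^δ_*(x) := limsup_{r→0⁺} (1/H̃^δ_∞(B(x,r))) ∫_{B(x,r)} |f(y) − f(x)| dH̃^δ_∞(y)`. -/
def lebDev (n : ℕ) (δ : ℝ) (f : En n → ℝ) (x : En n) : ℝ≥0∞ :=
  limsup (fun r : ℝ => choquetIntegralAbs n δ (ball x r) (fun y => f y - f x) /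
    dyadicContent n δ (ball x r)) (𝓝[>] (0 : ℝ))

/-- `limsup_{r→0⁺} f^δ_{B(x,r)}` of the ball averages. -/
def limsupAvg (n : ℕ) (δ : ℝ) (f : En n → ℝ≥0∞) (x : En n) : ℝ≥0∞ :=
  limsup (fun r : ℝ => ballAvg n δ f x r) (𝓝[>] (0 : ℝ))

lemma dyadicContent_mono {n : ℕ} {δ : ℝ} {E F : Set (En n)} (h : E ⊆ F) :
    dyadicContent n δ E ≤ dyadicContent n δ F :=
  le_iInf fun c => le_iInf fun hc =>
    iInf_le_of_le c (iInf_le_of_le (h.trans hc) le_rfl)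

lemma volume_dyadicCube (n : ℕ) (k : ℤ) (m : Fin n → ℤ) :
    volume (dyadicCube n k m) = (ENNReal.ofReal ((2:ℝ) ^ k)) ^ n := by
  have hE : dyadicCube n k m = (MeasurableEquiv.toLp 2 (Fin n → ℝ)).symm ⁻¹'
      (Set.pi univ fun i => Ico ((m i : ℝ) * 2 ^ k) (((m i : ℝ) + 1) * 2 ^ k)) := by
    ext x
    simp only [dyadicCube, mem_setOf_eq, mem_preimage, Set.mem_pi, mem_univ, forall_true_left,
      mem_Ico]
    rfl
  rw [hE, (EuclideanSpace.volume_preserving_symm_measurableEquiv_toLp (Fin n)).measure_preimage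
    ((MeasurableSet.univ_pi fun i => measurableSet_Ico).nullMeasurableSet),
    volume_pi_pi]
  have hv : ∀ i : Fin n, volume (Ico ((m i : ℝ) * 2 ^ k) (((m i : ℝ) + 1) * 2 ^ k))
      = ENNReal.ofReal ((2:ℝ) ^ k) := by
    intro i; rw [Real.volume_Ico]; ring_nf
  simp [hv]

lemma volume_le_of_content_lt {n : ℕ} {δ : ℝ} (hδ0 : 0 < δ) (hδn : δ ≤ n)
    {E : Set (En n)} {r : ℝ≥0∞} (hr1 : r ≤ 1) (h : dyadicContent n δ E < r) :
    volume E ≤ r := by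
  rw [dyadicContent, iInf_lt_iff] at h
  obtain ⟨c, h⟩ := h
  rw [iInf_lt_iff] at h
  obtain ⟨hc, hsum⟩ := h
  have hterm : ∀ i, ENNReal.ofReal (((2:ℝ) ^ (c i).1) ^ δ) < 1 :=
    fun i => lt_of_le_of_lt (ENNReal.le_tsum i) (hsum.trans_le hr1)
  have hkey : ∀ i, volume (dyadicCube n (c i).1 (c i).2)
      ≤ ENNReal.ofReal (((2:ℝ) ^ (c i).1) ^ δ) := by
    intro i
    rw [volume_dyadicCube]
    have h2pos : (0:ℝ) < (2:ℝ) ^ (c i).1 := zpow_pos (by norm_num) _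
    have h2le1 : (2:ℝ) ^ (c i).1 ≤ 1 := by
      by_contra hcon
      push_neg at hcon
      have h1 : (1:ℝ) ≤ ((2:ℝ) ^ (c i).1) ^ δ := Real.one_le_rpow hcon.le hδ0.le
      have h2 := hterm i
      rw [ENNReal.ofReal_lt_one] at h2
      linarith
    rw [← ENNReal.ofReal_pow h2pos.le]
    apply ENNReal.ofReal_le_ofReal
    calc ((2:ℝ) ^ (c i).1) ^ n = ((2:ℝ) ^ (c i).1) ^ (n : ℝ) := by
          rw [Real.rpow_natCast]
      _ ≤ ((2:ℝ) ^ (c i).1) ^ δ := Real.rpow_le_rpow_of_exponent_ge h2pos h2le1 hδn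
  calc volume E ≤ volume (⋃ i, dyadicCube n (c i).1 (c i).2) :=
        measure_mono (hc.trans interior_subset)
    _ ≤ ∑' i, volume (dyadicCube n (c i).1 (c i).2) := measure_iUnion_le _
    _ ≤ ∑' i, ENNReal.ofReal (((2:ℝ) ^ (c i).1) ^ δ) := ENNReal.tsum_le_tsum hkey
    _ ≤ r := hsum.le

lemma chebyshev {n : ℕ} {δ : ℝ} (g : En n → ℝ) {t : ℝ} (ht : 0 < t) :
    ENNReal.ofReal t * dyadicContent n δ {x | t < |g x|}
      ≤ choquetIntegralAbs n δ univ g := by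
  unfold choquetIntegralAbs choquetIntegral
  calc ENNReal.ofReal t * dyadicContent n δ {x | t < |g x|}
      = ∫⁻ _ in Ioc (0:ℝ) t, dyadicContent n δ {x | t < |g x|} := by
        rw [setLIntegral_const, Real.volume_Ioc, sub_zero, mul_comm]
    _ ≤ ∫⁻ s in Ioc (0:ℝ) t,
        dyadicContent n δ {x | x ∈ univ ∧ ENNReal.ofReal s < ENNReal.ofReal |g x|} := by
        refine setLIntegral_mono' measurableSet_Ioc fun s hs => dyadicContent_mono ?_
        intro x hx
        refine ⟨mem_univ _, ?_⟩
        rw [ENNReal.ofReal_lt_ofReal_iff (lt_trans ht hx)]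
        exact lt_of_le_of_lt hs.2 hx
    _ ≤ ∫⁻ s in Ioi (0:ℝ),
        dyadicContent n δ {x | x ∈ univ ∧ ENNReal.ofReal s < ENNReal.ofReal |g x|} :=
        lintegral_mono_set Ioc_subset_Ioi_self


/-- an `nL¹`-limit of continuous functions in `nL¹(ℝⁿ, H̃^δ_∞)` is
Lebesgue measurable. -/
theorem nL1_limit_is_lebesgue_measurable (n : ℕ) (hn : 1 ≤ n)
    (δ : ℝ) (hδ0 : 0 < δ) (hδn : δ ≤ n)
    (f : En n → ℝ) (hf : choquetIntegralAbs n δ univ f < ⊤)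
    (hlimit : ∃ φ : ℕ → En n → ℝ, (∀ i, Continuous (φ i)) ∧
      Tendsto (fun i => choquetIntegralAbs n δ univ (fun x => f x - φ i x))
        atTop (𝓝 0)) :
    NullMeasurable f (volume : Measure (En n)) := by
  obtain ⟨φ, hφc, hφlim⟩ := hlimit
  -- choose a rapidly-converging subsequence
  have hsel : ∀ k : ℕ, ∃ i : ℕ, choquetIntegralAbs n δ univ (fun x => f x - φ i x)
      < ENNReal.ofReal (1/((k:ℝ)+1)) * (2:ℝ≥0∞)⁻¹ ^ (k+1) := by
    intro k
    have hpos : (0:ℝ≥0∞) < ENNReal.ofReal (1/((k:ℝ)+1)) * (2:ℝ≥0∞)⁻¹ ^ (k+1) := by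
      refine ENNReal.mul_pos ?_ (ENNReal.pow_ne_zero (by simp) _)
      exact (ENNReal.ofReal_pos.mpr (by positivity)).ne'
    exact (hφlim.eventually (gt_mem_nhds hpos)).exists
  choose ι hι using hsel
  set A : ℕ → Set (En n) := fun k => {x | 1/((k:ℝ)+1) < |f x - φ (ι k) x|} with hA
  have hcont : ∀ k, dyadicContent n δ (A k) < (2:ℝ≥0∞)⁻¹ ^ (k+1) := by
    intro k
    have ht : (0:ℝ) < 1/((k:ℝ)+1) := by positivity
    have h1 := chebyshev (n := n) (δ := δ) (fun x => f x - φ (ι k) x) ht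
    have h2 := lt_of_le_of_lt h1 (hι k)
    have h0 : ENNReal.ofReal (1/((k:ℝ)+1)) ≠ 0 := (ENNReal.ofReal_pos.mpr ht).ne'
    exact (ENNReal.mul_lt_mul_iff_right h0 ENNReal.ofReal_ne_top).mp h2
  have hvol : ∀ k, volume (A k) ≤ (2:ℝ≥0∞)⁻¹ ^ (k+1) := by
    intro k
    refine volume_le_of_content_lt hδ0 hδn ?_ (hcont k)
    exact pow_le_one' (by simp) _
  set Elim : Set (En n) := ⋂ K : ℕ, ⋃ j : ℕ, A (K + j) with hElimdef
  have hElim : volume Elim = 0 := by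
    have hle : ∀ K : ℕ, volume Elim ≤ (2:ℝ≥0∞)⁻¹ ^ K := by
      intro K
      calc volume Elim ≤ volume (⋃ j, A (K + j)) := measure_mono (iInter_subset _ K)
        _ ≤ ∑' j, volume (A (K + j)) := measure_iUnion_le _
        _ ≤ ∑' j : ℕ, (2:ℝ≥0∞)⁻¹ ^ (K + j + 1) := ENNReal.tsum_le_tsum fun j => hvol _
        _ = (2:ℝ≥0∞)⁻¹ ^ (K+1) * ∑' j : ℕ, (2:ℝ≥0∞)⁻¹ ^ j := by
            rw [← ENNReal.tsum_mul_left]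
            congr 1; funext j; rw [← pow_add]; ring_nf
        _ = (2:ℝ≥0∞)⁻¹ ^ (K+1) * 2 := by
            rw [ENNReal.tsum_geometric]
            congr 1
            rw [ENNReal.one_sub_inv_two]
            simp
        _ ≤ (2:ℝ≥0∞)⁻¹ ^ K := by
            rw [pow_succ, mul_assoc, ENNReal.inv_mul_cancel (by norm_num) (by norm_num)]
            simp
    have htend : Tendsto (fun K : ℕ => (2:ℝ≥0∞)⁻¹ ^ K) atTop (𝓝 0) :=
      ENNReal.tendsto_pow_atTop_nhds_zero_of_lt_one (by simp [ENNReal.inv_lt_one])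
    exact le_antisymm (ge_of_tendsto' htend hle) (zero_le)
  have hae : ∀ᵐ x ∂(volume : Measure (En n)),
      Tendsto (fun k => φ (ι k) x) atTop (𝓝 (f x)) := by
    rw [ae_iff]
    refine measure_mono_null ?_ hElim
    intro x hx
    simp only [mem_setOf_eq] at hx
    rw [hElimdef, mem_iInter]
    intro K
    by_contra hxK
    apply hx
    rw [mem_iUnion] at hxK
    push_neg at hxK
    rw [tendsto_iff_dist_tendsto_zero]
    refine squeeze_zero' (Eventually.of_forall fun k => dist_nonneg)
      (eventually_atTop.2 ⟨K, fun k hk => ?_⟩)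
      tendsto_one_div_add_atTop_nhds_zero_nat
    have hxk : x ∉ A k := by
      have := hxK (k - K)
      rwa [Nat.add_sub_cancel' hk] at this
    simp only [hA, mem_setOf_eq, not_lt] at hxk
    rw [Real.dist_eq, abs_sub_comm]
    exact hxk
  have haem : AEMeasurable f (volume : Measure (En n)) :=
    aemeasurable_of_tendsto_metrizable_ae atTop
      (fun k => ((hφc (ι k)).measurable).aemeasurable) hae
  exact (haem.measurable_mk.nullMeasurable).congr haem.ae_eq_mk.symm
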